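/- For the quartic matrix potential V(x) = (μ/2)x² + (γ/4)x⁴ with μ, γ > 0, the asymptotic eigenvalue density ρ(x) = (1/2π)(μ + 2a²γ + γx²)√(4a² − x²) on [−2a, 2a], where a² = (√(μ² + 12γ) − μ)/(6γ), is a probability density: ∫ ρ(x) dx = 1. -/

import Mathlib

open MeasureTheory Real

/-- The parameter `a²` of the quartic ensemble. -/
noncomputable def quarticA2 (μ γ : ℝ) : ℝ := (Real.sqrt (μ^2 + 12*γ) - μ) / (6*γ)

/-- The asymptotic eigenvalue density of the quartic ensemble. -/
noncomputable def quarticDensity (μ γ x : ℝ) : ℝ :=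
  if |x| ≤ 2 * Real.sqrt (quarticA2 μ γ) then
    (1/(2*Real.pi)) * (μ + 2*(quarticA2 μ γ)*γ + γ*x^2) *
      Real.sqrt (4*(quarticA2 μ γ) - x^2)
  else 0

open intervalIntegral in
lemma integral_sq_mul_sqrt_one_sub_sq :
    ∫ x in (-1 : ℝ)..1, x ^ 2 * √(1 - x ^ 2) = π / 8 :=
  calc
    _ = ∫ x in sin (-(π / 2)).. sin (π / 2), x ^ 2 * √(1 - x ^ 2 : ℝ) := by
          rw [sin_neg, sin_pi_div_two]
    _ = ∫ x in (-(π / 2))..(π / 2), sin x ^ 2 * √(1 - sin x ^ 2 : ℝ) * cos x :=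
          (integral_comp_mul_deriv (fun x _ => hasDerivAt_sin x) continuousOn_cos
            (by fun_prop)).symm
    _ = ∫ x in (-(π / 2))..(π / 2), sin x ^ 2 * cos x ^ 2 := by
          refine integral_congr_ae (MeasureTheory.ae_of_all _ fun _ h => ?_)
          rw [Set.uIoc_of_le (neg_le_self (le_of_lt (half_pos Real.pi_pos))), Set.mem_Ioc] at h
          rw [← Real.cos_eq_sqrt_one_sub_sin_sq (le_of_lt h.1) h.2]
          ring
    _ = π / 8 := by
          rw [integral_sin_sq_mul_cos_sq]
          have h1 : sin (4 * (π/2)) = 0 := by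
            rw [show (4:ℝ) * (π/2) = 2*π by ring, Real.sin_two_pi]
          have h2 : sin (4 * (-(π/2))) = 0 := by
            rw [show (4:ℝ) * (-(π/2)) = -(2*π) by ring, Real.sin_neg, Real.sin_two_pi]; ring
          rw [h1, h2]; ring

lemma integral_sqrt_sq_sub_sq {r : ℝ} (hr : 0 < r) :
    ∫ x in (-r)..r, √(r ^ 2 - x ^ 2) = π * r ^ 2 / 2 := by
  have key : ∀ u : ℝ, √(r ^ 2 - (r * u) ^ 2) = r * √(1 - u ^ 2) := by
    intro u
    rw [show r ^ 2 - (r * u) ^ 2 = r ^ 2 * (1 - u ^ 2) by ring, Real.sqrt_mul (sq_nonneg r),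
      Real.sqrt_sq hr.le]
  have := intervalIntegral.integral_comp_mul_left (fun x => √(r ^ 2 - x ^ 2))
    (a := -1) (b := 1) (ne_of_gt hr)
  simp only [key, mul_one, mul_neg_one] at this
  rw [intervalIntegral.integral_const_mul, integral_sqrt_one_sub_sq] at this
  have hne : r ≠ 0 := ne_of_gt hr
  rw [smul_eq_mul] at this
  field_simp at this
  nlinarith [this]

lemma integral_sq_mul_sqrt_sq_sub_sq {r : ℝ} (hr : 0 < r) :
    ∫ x in (-r)..r, x ^ 2 * √(r ^ 2 - x ^ 2) = π * r ^ 4 / 8 := by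
  have key : ∀ u : ℝ, (r * u) ^ 2 * √(r ^ 2 - (r * u) ^ 2) = r ^ 3 * (u ^ 2 * √(1 - u ^ 2)) := by
    intro u
    rw [show r ^ 2 - (r * u) ^ 2 = r ^ 2 * (1 - u ^ 2) by ring, Real.sqrt_mul (sq_nonneg r),
      Real.sqrt_sq hr.le]
    ring
  have := intervalIntegral.integral_comp_mul_left (fun x => x ^ 2 * √(r ^ 2 - x ^ 2))
    (a := -1) (b := 1) (ne_of_gt hr)
  simp only [key, mul_one, mul_neg_one] at this
  rw [intervalIntegral.integral_const_mul, integral_sq_mul_sqrt_one_sub_sq] at this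
  have hne : r ≠ 0 := ne_of_gt hr
  rw [smul_eq_mul] at this
  field_simp at this
  nlinarith [this]

theorem quarticDensity_integral_eq_one (μ γ : ℝ) (hμ : 0 < μ) (hγ : 0 < γ) :
    ∫ x : ℝ, quarticDensity μ γ x = 1 := by
  set A := quarticA2 μ γ with hA
  have hs : μ < Real.sqrt (μ ^ 2 + 12 * γ) :=
    calc μ = Real.sqrt (μ ^ 2) := (Real.sqrt_sq hμ.le).symm
      _ < _ := Real.sqrt_lt_sqrt (sq_nonneg μ) (by linarith)
  have hApos : 0 < A := by
    rw [hA, quarticA2]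
    exact div_pos (sub_pos.mpr hs) (by positivity)
  set r : ℝ := 2 * Real.sqrt A with hr
  have hrpos : 0 < r := by positivity
  have hr2 : r ^ 2 = 4 * A := by
    rw [hr, mul_pow, Real.sq_sqrt hApos.le]; ring
  set c : ℝ := μ + 2 * A * γ with hc
  set f : ℝ → ℝ := fun x => (1/(2*π)) * (c + γ * x ^ 2) * √(r ^ 2 - x ^ 2) with hf
  have hdens : quarticDensity μ γ = Set.indicator (Set.Icc (-r) r) f := by
    funext x
    rw [quarticDensity]
    simp only [← hA, ← hr]
    by_cases h : |x| ≤ r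
    · rw [if_pos h, Set.indicator_of_mem (Set.mem_Icc.mpr (abs_le.mp h))]
      simp only [hf, ← hc, ← hr2]
    · rw [if_neg h, Set.indicator_of_notMem
        (fun hx => h (abs_le.mpr (Set.mem_Icc.mp hx)))]
  have hcont : Continuous f := by fun_prop
  have hint : ∫ x : ℝ, quarticDensity μ γ x = ∫ x in (-r)..r, f x := by
    rw [hdens, MeasureTheory.integral_indicator measurableSet_Icc,
      MeasureTheory.integral_Icc_eq_integral_Ioc,
      ← intervalIntegral.integral_of_le (by linarith)]
  rw [hint]
  have heq : ∀ x : ℝ, f x = (1/(2*π)) * c * √(r ^ 2 - x ^ 2)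
      + (1/(2*π)) * γ * (x ^ 2 * √(r ^ 2 - x ^ 2)) := by
    intro x; rw [hf]; ring
  rw [intervalIntegral.integral_congr (fun x _ => heq x), intervalIntegral.integral_add
      (by apply Continuous.intervalIntegrable; fun_prop)
      (by apply Continuous.intervalIntegrable; fun_prop),
    intervalIntegral.integral_const_mul, intervalIntegral.integral_const_mul,
    integral_sqrt_sq_sub_sq hrpos, integral_sq_mul_sqrt_sq_sub_sq hrpos]
  have hπ : π ≠ 0 := Real.pi_ne_zero
  have hkey : 3 * γ * A ^ 2 + μ * A = 1 := by
    have hs2 : Real.sqrt (μ ^ 2 + 12 * γ) ^ 2 = μ ^ 2 + 12 * γ :=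
      Real.sq_sqrt (by positivity)
    rw [hA, quarticA2]
    field_simp
    nlinarith [hs2, show √(μ ^ 2 + γ * 12) ^ 2 = μ ^ 2 + γ * 12 by rw [mul_comm γ]; exact hs2]
  have hr4 : r ^ 4 = 16 * A ^ 2 := by
    rw [show r ^ 4 = (r ^ 2) ^ 2 by ring, hr2]; ring
  rw [hr2, hr4, hc]
  field_simp
  nlinarith [hkey, mul_pos Real.pi_pos Real.pi_pos, sq_nonneg π]
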